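/- A ring R is GUNC if and only if R is either a local ring with nil Jacobson radical or a uniquely nil-clean (UNC) ring. -/

import Mathlib

def IsUniquelyNilClean {R : Type*} [Ring R] (a : R) : Prop :=
  ∃! e : R, IsIdempotentElem e ∧ IsNilpotent (a - e)

/-- A ring is GUNC if every non-invertible element is uniquely nil-clean. -/
def IsGUNC (R : Type*) [Ring R] : Prop :=
  ∀ a : R, ¬ IsUnit a → IsUniquelyNilClean a

/-- A ring is UNC if every element is uniquely nil-clean. -/
def IsUNC (R : Type*) [Ring R] : Prop :=
  ∀ a : R, IsUniquelyNilClean a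

section Aux
variable {R : Type*} [Ring R]

lemma idem_eq_one_of_isUnit {e : R} (he : IsIdempotentElem e) (h : IsUnit e) : e = 1 := by
  obtain ⟨u, hu⟩ := h
  have h1 : (↑u⁻¹ : R) * e = 1 := by rw [← hu]; exact u.inv_mul
  calc e = 1 * e := (one_mul e).symm
    _ = ((↑u⁻¹ : R) * e) * e := by rw [h1]
    _ = (↑u⁻¹ : R) * (e * e) := by rw [mul_assoc]
    _ = (↑u⁻¹ : R) * e := by rw [he.eq]
    _ = 1 := h1

lemma idem_of_local [IsLocalRing R] {e : R} (he : IsIdempotentElem e) : e = 0 ∨ e = 1 := by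
  rcases IsLocalRing.isUnit_or_isUnit_of_add_one (a := e) (b := 1 - e) (by abel) with h | h
  · exact Or.inr (idem_eq_one_of_isUnit he h)
  · left
    have h2 := idem_eq_one_of_isUnit he.one_sub h
    rwa [sub_eq_self] at h2

lemma isUnit_of_left_inverse [IsLocalRing R] {a t : R} (h : t * a = 1) : IsUnit a := by
  have hid : IsIdempotentElem (a * t) := by
    unfold IsIdempotentElem
    calc a * t * (a * t) = a * (t * a) * t := by noncomm_ring
      _ = a * t := by rw [h, mul_one]
  rcases idem_of_local hid with h0 | h1
  · exfalso
    have ha : a = 0 := by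
      calc a = a * (t * a) := by rw [h, mul_one]
        _ = (a * t) * a := by rw [mul_assoc]
        _ = 0 := by rw [h0, zero_mul]
    have : (1 : R) = 0 := by rw [← h, ha, mul_zero]
    exact one_ne_zero this
  · exact ⟨⟨a, t, h1, h⟩, rfl⟩

lemma nonunit_mem_jacobson [IsLocalRing R] {a : R} (ha : ¬ IsUnit a) :
    a ∈ (⊥ : TwoSidedIdeal R).jacobson := by
  rw [TwoSidedIdeal.mem_jacobson_iff]
  intro y
  have h1 : ¬ IsUnit (y * a) := by
    intro h
    obtain ⟨u, hu⟩ := h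
    have : ((↑u⁻¹ : R) * y) * a = 1 := by rw [mul_assoc, ← hu]; exact u.inv_mul
    exact ha (isUnit_of_left_inverse this)
  have h2 : IsUnit (y * a + 1) := by
    rcases IsLocalRing.isUnit_or_isUnit_of_add_one (a := y * a + 1) (b := -(y * a)) (by abel)
      with h | h
    · exact h
    · exact absurd (by simpa using h.neg) h1
  obtain ⟨u, hu⟩ := h2
  refine ⟨(↑u⁻¹ : R), ?_⟩
  rw [TwoSidedIdeal.mem_bot]
  have h3 : (↑u⁻¹ : R) * (y * a + 1) = 1 := by rw [← hu]; exact u.inv_mul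
  calc (↑u⁻¹ : R) * y * a + ↑u⁻¹ - 1 = (↑u⁻¹ : R) * (y * a + 1) - 1 := by noncomm_ring
    _ = 0 := by rw [h3, sub_self]

lemma gunc_central (hG : IsGUNC R) {f : R} (hf : IsIdempotentElem f) (r : R) :
    f * r = r * f := by
  have key : ∀ g : R, IsIdempotentElem g → ∀ s : R, g * (s * (1 - g)) = 0 := by
    intro g hg s
    by_cases hg1 : g = 1
    · subst hg1; simp
    · have hnu : ¬ IsUnit g := fun h => hg1 (idem_eq_one_of_isUnit hg h)
      obtain ⟨e, -, hu⟩ := hG g hnu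
      set x := g * (s * (1 - g)) with hx
      have hgx : g * x = x := by rw [hx, ← mul_assoc, hg.eq]
      have hg0 : (1 - g) * g = 0 := by rw [sub_mul, one_mul, hg.eq, sub_self]
      have hxg : x * g = 0 := by
        rw [hx, mul_assoc, mul_assoc, hg0, mul_zero, mul_zero]
      have hxx : x * x = 0 := by
        rw [hx, ← mul_assoc, show g * (s * (1 - g)) * g = x * g from rfl, hxg, zero_mul]
      have hgx_idem : IsIdempotentElem (g + x) := by
        unfold IsIdempotentElem
        rw [mul_add, add_mul, add_mul, hg.eq, hgx, hxg, hxx, add_zero, add_zero]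
      have h1 : g = e := hu g ⟨hg, by rw [sub_self]; exact IsNilpotent.zero⟩
      have h2 : g + x = e := by
        refine hu _ ⟨hgx_idem, ⟨2, ?_⟩⟩
        rw [show g - (g + x) = -x by abel, neg_sq, sq, hxx]
      rw [← h1] at h2
      exact add_eq_left.mp h2
  have k1 : f * (r * (1 - f)) = 0 := key f hf r
  have k2 : (1 - f) * (r * f) = 0 := by
    have := key (1 - f) hf.one_sub r
    rwa [sub_sub_cancel] at this
  have e1 : f * r = f * (r * f) := by
    rw [mul_sub, mul_one, mul_sub] at k1
    exact sub_eq_zero.mp k1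
  have e2 : r * f = f * (r * f) := by
    rw [sub_mul, one_mul] at k2
    exact sub_eq_zero.mp k2
  exact e1.trans e2.symm

lemma unc_unique (hc : ∀ f : R, IsIdempotentElem f → ∀ r, f * r = r * f)
    {a e f : R} (he : IsIdempotentElem e) (hf : IsIdempotentElem f)
    (hne : IsNilpotent (a - e)) (hnf : IsNilpotent (a - f)) : e = f := by
  have cae : Commute a e := (hc e he a).symm
  have caf : Commute a f := (hc f hf a).symm
  have cef : Commute e f := hc e he f
  have hcomm : Commute (a - f) (a - e) :=
    Commute.sub_left ((Commute.refl a).sub_right cae) (caf.symm.sub_right cef.symm)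
  have hef : IsNilpotent (e - f) := by
    rw [show e - f = (a - f) - (a - e) by abel]
    exact Commute.isNilpotent_sub hcomm hnf hne
  have key : ∀ p q : R, IsIdempotentElem p → IsIdempotentElem q →
      (∀ r, p * r = r * p) → (∀ r, q * r = r * q) → IsNilpotent (p - q) → p - p * q = 0 := by
    intro p q hp hq hcp hcq hn
    have h1 : p * (p * q) = p * q := by rw [← mul_assoc, hp.eq]
    have h2 : (p * q) * p = p * q := by rw [mul_assoc, hcq p, h1]
    have h3 : (p * q) * (p * q) = p * q := by rw [← mul_assoc, h2, mul_assoc, hq.eq]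
    have hidem : IsIdempotentElem (p - p * q) := by
      unfold IsIdempotentElem
      rw [sub_mul, mul_sub, mul_sub, h1, h2, h3, hp.eq]
      abel
    have hnil : IsNilpotent (p - p * q) := by
      rw [show p - p * q = p * (p - q) by rw [mul_sub, hp.eq]]
      exact Commute.isNilpotent_mul_left (hcp (p - q)) hn
    obtain ⟨n, hn0⟩ := hnil
    rcases n with _ | n
    · have h1 : (1 : R) = 0 := by simpa using hn0
      calc p - p * q = (p - p * q) * 1 := (mul_one _).symm
        _ = 0 := by rw [h1, mul_zero]
    · exact (hidem.pow_succ_eq n).symm.trans hn0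
  have kef : e - e * f = 0 := key e f he hf (hc e he) (hc f hf) hef
  have kfe : f - f * e = 0 := by
    refine key f e hf he (hc f hf) (hc e he) ?_
    rw [show f - e = -(e - f) by abel]
    exact hef.neg
  have : f * e = e * f := (hc e he f).symm
  rw [this] at kfe
  calc e = e * f := (sub_eq_zero.mp kef)
    _ = f := (sub_eq_zero.mp kfe).symm

end Aux

theorem gunc_iff_local_or_unc {R : Type*} [Ring R] :
    IsGUNC R ↔
      (IsLocalRing R ∧ ∀ a ∈ (⊥ : TwoSidedIdeal R).jacobson, IsNilpotent a) ∨
        IsUNC R := by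
  constructor
  · intro hG
    by_cases hsub : Subsingleton R
    · right
      intro a
      exact ⟨0, ⟨IsIdempotentElem.zero, ⟨1, Subsingleton.elim _ _⟩⟩,
        fun y _ => Subsingleton.elim y 0⟩
    · haveI : Nontrivial R := not_subsingleton_iff_nontrivial.mp hsub
      have hc : ∀ f : R, IsIdempotentElem f → ∀ r, f * r = r * f :=
        fun f hf r => gunc_central hG hf r
      by_cases hid : ∃ e : R, IsIdempotentElem e ∧ e ≠ 0 ∧ e ≠ 1
      · right
        intro a
        by_cases hu : IsUnit a
        · obtain ⟨e, hei, he0, he1⟩ := hid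
          obtain ⟨u, hu'⟩ := hu
          have hce : ∀ r : R, e * r = r * e := hc e hei
          have he' : IsIdempotentElem (1 - e) := hei.one_sub
          have hce' : ∀ r : R, (1 - e) * r = r * (1 - e) := hc (1 - e) he'
          have hee : e * (1 - e) = 0 := by rw [mul_sub, mul_one, hei.eq, sub_self]
          have hee' : (1 - e) * e = 0 := by rw [sub_mul, one_mul, hei.eq, sub_self]
          have h1 : ¬ IsUnit (e * a) := by
            intro h
            obtain ⟨v, hv⟩ := h
            have hz : (1 : R) - e = 0 := by
              calc 1 - e = (1 - e) * 1 := (mul_one _).symm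
                _ = (1 - e) * ((e * a) * ↑v⁻¹) := by rw [← hv, v.mul_inv]
                _ = ((1 - e) * e) * (a * ↑v⁻¹) := by noncomm_ring
                _ = 0 := by rw [hee', zero_mul]
            exact he1 (sub_eq_zero.mp hz).symm
          have h2 : ¬ IsUnit ((1 - e) * a) := by
            intro h
            obtain ⟨v, hv⟩ := h
            have hz : e = 0 := by
              calc e = e * 1 := (mul_one _).symm
                _ = e * (((1 - e) * a) * ↑v⁻¹) := by rw [← hv, v.mul_inv]
                _ = (e * (1 - e)) * (a * ↑v⁻¹) := by noncomm_ring
                _ = 0 := by rw [hee, zero_mul]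
            exact he0 hz
          obtain ⟨f, ⟨hfi, hfn⟩, -⟩ := hG _ h1
          obtain ⟨g, ⟨hgi, hgn⟩, -⟩ := hG _ h2
          have hx : IsNilpotent (e * a - e * f) := by
            have hnil := Commute.isNilpotent_mul_left (hce (e * a - f)) hfn
            rwa [show e * (e * a - f) = e * a - e * f by
              rw [mul_sub, ← mul_assoc, hei.eq]] at hnil
          have hy : IsNilpotent ((1 - e) * a - (1 - e) * g) := by
            have hnil := Commute.isNilpotent_mul_left (hce' ((1 - e) * a - g)) hgn
            rwa [show (1 - e) * ((1 - e) * a - g) = (1 - e) * a - (1 - e) * g by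
              rw [mul_sub, ← mul_assoc, he'.eq]] at hnil
          have hxy : (e * a - e * f) * ((1 - e) * a - (1 - e) * g) = 0 := by
            calc (e * a - e * f) * ((1 - e) * a - (1 - e) * g)
                = (e * (a - f)) * ((1 - e) * (a - g)) := by rw [mul_sub e a f, mul_sub (1 - e) a g]
              _ = e * ((a - f) * (1 - e)) * (a - g) := by noncomm_ring
              _ = e * ((1 - e) * (a - f)) * (a - g) := by rw [← hce' (a - f)]
              _ = (e * (1 - e)) * ((a - f) * (a - g)) := by noncomm_ring
              _ = 0 := by rw [hee, zero_mul]
          have hyx : ((1 - e) * a - (1 - e) * g) * (e * a - e * f) = 0 := by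
            calc ((1 - e) * a - (1 - e) * g) * (e * a - e * f)
                = ((1 - e) * (a - g)) * (e * (a - f)) := by rw [mul_sub e a f, mul_sub (1 - e) a g]
              _ = (1 - e) * ((a - g) * e) * (a - f) := by noncomm_ring
              _ = (1 - e) * (e * (a - g)) * (a - f) := by rw [← hce (a - g)]
              _ = ((1 - e) * e) * ((a - g) * (a - f)) := by noncomm_ring
              _ = 0 := by rw [hee', zero_mul]
          have hcxy : Commute (e * a - e * f) ((1 - e) * a - (1 - e) * g) := by
            show _ * _ = _ * _
            rw [hxy, hyx]
          have hsum : IsNilpotent ((e * a - e * f) + ((1 - e) * a - (1 - e) * g)) :=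
            Commute.isNilpotent_add hcxy hx hy
          have hax : a - (e * f + (1 - e) * g)
              = (e * a - e * f) + ((1 - e) * a - (1 - e) * g) := by
            have hsplit : e * a + (1 - e) * a = a := by
              rw [← add_mul, add_sub_cancel, one_mul]
            calc a - (e * f + (1 - e) * g)
                = (e * a + (1 - e) * a) - (e * f + (1 - e) * g) := by rw [hsplit]
              _ = (e * a - e * f) + ((1 - e) * a - (1 - e) * g) := by abel
          have hpq : (e * f) * ((1 - e) * g) = 0 := by
            calc (e * f) * ((1 - e) * g) = e * (f * (1 - e)) * g := by noncomm_ring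
              _ = e * ((1 - e) * f) * g := by rw [← hce' f]
              _ = (e * (1 - e)) * (f * g) := by noncomm_ring
              _ = 0 := by rw [hee, zero_mul]
          have hqp : ((1 - e) * g) * (e * f) = 0 := by
            calc ((1 - e) * g) * (e * f) = (1 - e) * (g * e) * f := by noncomm_ring
              _ = (1 - e) * (e * g) * f := by rw [← hce g]
              _ = ((1 - e) * e) * (g * f) := by noncomm_ring
              _ = 0 := by rw [hee', zero_mul]
          have hp : IsIdempotentElem (e * f) := by
            unfold IsIdempotentElem
            calc e * f * (e * f) = e * (f * e) * f := by noncomm_ring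
              _ = e * (e * f) * f := by rw [← hce f]
              _ = (e * e) * (f * f) := by noncomm_ring
              _ = e * f := by rw [hei.eq, hfi.eq]
          have hq : IsIdempotentElem ((1 - e) * g) := by
            unfold IsIdempotentElem
            calc (1 - e) * g * ((1 - e) * g) = (1 - e) * (g * (1 - e)) * g := by noncomm_ring
              _ = (1 - e) * ((1 - e) * g) * g := by rw [← hce' g]
              _ = ((1 - e) * (1 - e)) * (g * g) := by noncomm_ring
              _ = (1 - e) * g := by rw [he'.eq, hgi.eq]
          have hh : IsIdempotentElem (e * f + (1 - e) * g) := by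
            unfold IsIdempotentElem
            rw [mul_add, add_mul, add_mul, hp.eq, hq.eq, hpq, hqp]
            abel
          refine ⟨e * f + (1 - e) * g, ⟨hh, by rw [hax]; exact hsum⟩, ?_⟩
          rintro y ⟨hyi, hyn⟩
          exact unc_unique hc hyi hh hyn (by rw [hax]; exact hsum)
        · obtain ⟨f, ⟨hfi, hfn⟩, -⟩ := hG a hu
          exact ⟨f, ⟨hfi, hfn⟩, fun y hy => unc_unique hc hy.1 hfi hy.2 hfn⟩
      · left
        push_neg at hid
        have hid' : ∀ e : R, IsIdempotentElem e → e = 0 ∨ e = 1 :=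
          fun e he => or_iff_not_imp_left.mpr (hid e he)
        have hnil' : ∀ a : R, ¬ IsUnit a → IsNilpotent a := by
          intro a ha
          obtain ⟨e, ⟨hei, hen⟩, -⟩ := hG a ha
          rcases hid' e hei with h0 | h1
          · rw [h0] at hen; simpa using hen
          · exfalso
            rw [h1] at hen
            exact ha (by simpa using hen.isUnit_add_one)
        constructor
        · refine ⟨?_⟩
          intro a b hab
          by_cases ha : IsUnit a
          · exact Or.inl ha
          · right
            have hb : b = 1 - a := by rw [← hab]; abel
            rw [hb]
            exact (hnil' a ha).isUnit_one_sub
        · intro a haJ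
          by_cases hu : IsUnit a
          · exfalso
            obtain ⟨u, rfl⟩ := hu
            rw [TwoSidedIdeal.mem_jacobson_iff] at haJ
            obtain ⟨z, hz⟩ := haJ (-(↑u⁻¹ : R))
            rw [TwoSidedIdeal.mem_bot] at hz
            have hzu : z * (-(↑u⁻¹ : R)) * ↑u = -z := by
              rw [mul_neg, neg_mul, mul_assoc, u.inv_mul, mul_one]
            rw [hzu] at hz
            have h0 : (-1 : R) = 0 := by rw [← hz]; abel
            exact one_ne_zero (neg_eq_zero.mp h0)
          · exact hnil' a hu
  · rintro (⟨hL, hnil⟩ | hU)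
    · haveI := hL
      intro a ha
      refine ⟨0, ⟨IsIdempotentElem.zero,
        by simpa using hnil a (nonunit_mem_jacobson ha)⟩, ?_⟩
      rintro y ⟨hyi, hyn⟩
      rcases idem_of_local hyi with h0 | h1
      · exact h0
      · exfalso
        rw [h1] at hyn
        exact ha (by simpa using hyn.isUnit_add_one)
    · intro a _
      exact hU a
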